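/- Let V be a finite-dimensional real inner product space with orthonormal basis e₁,…,e_m (m ≥ 2), and let L_{ab} (1 ≤ a,b ≤ m−1) be real numbers with L_{ab} = L_{ba}. For each a define ω_a := Σ_{b=1}^{m−1} L_{ab}·(ext(e_m)∘int(e_b) + int(e_m)∘ext(e_b)) as an endomorphism of Λ(V). Then Σ_{a=1}^{m−1} cl(e_m)∘cl(e_a)∘ω_a = Σ_{a,b=1}^{m−1} L_{ab}·( ext(e_m)∘int(e_m)∘int(e_a)∘ext(e_b) + int(e_m)∘ext(e_m)∘ext(e_a)∘int(e_b) ). -/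

import Mathlib

open scoped RealInnerProductSpace

/-- Left exterior multiplication by `v` on the exterior algebra `Λ(V)`. -/
noncomputable def extMul {V : Type*} [NormedAddCommGroup V] [InnerProductSpace ℝ V] (v : V) :
    ExteriorAlgebra ℝ V →ₗ[ℝ] ExteriorAlgebra ℝ V :=
  LinearMap.mulLeft ℝ (ExteriorAlgebra.ι ℝ v)

/-- Interior multiplication (contraction) with `v` on the exterior algebra `Λ(V)`:
the antiderivation pairing with `v` via the inner product. -/
noncomputable def intMul {V : Type*} [NormedAddCommGroup V] [InnerProductSpace ℝ V] (v : V) :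
    ExteriorAlgebra ℝ V →ₗ[ℝ] ExteriorAlgebra ℝ V :=
  CliffordAlgebra.contractLeft (innerₛₗ ℝ v)

/-- Clifford multiplication `cl(v) = ext(v) - int(v)`. -/
noncomputable def clMul {V : Type*} [NormedAddCommGroup V] [InnerProductSpace ℝ V] (v : V) :
    ExteriorAlgebra ℝ V →ₗ[ℝ] ExteriorAlgebra ℝ V :=
  extMul v - intMul v

section Aux

variable {V : Type*} [NormedAddCommGroup V] [InnerProductSpace ℝ V]

lemma extMul_mul_extMul (v w : V) :
    (extMul v * extMul w : Module.End ℝ (ExteriorAlgebra ℝ V)) = -(extMul w * extMul v) := by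
  refine LinearMap.ext fun x => ?_
  simp only [extMul, Module.End.mul_apply, LinearMap.mulLeft_apply, LinearMap.neg_apply,
    ← mul_assoc]
  rw [show ExteriorAlgebra.ι ℝ v * ExteriorAlgebra.ι ℝ w
      = -(ExteriorAlgebra.ι ℝ w * ExteriorAlgebra.ι ℝ v) from
    eq_neg_of_add_eq_zero_left (ExteriorAlgebra.ι_add_mul_swap v w), neg_mul]

lemma extMul_mul_self (v : V) :
    (extMul v * extMul v : Module.End ℝ (ExteriorAlgebra ℝ V)) = 0 := by
  refine LinearMap.ext fun x => ?_
  simp only [extMul, Module.End.mul_apply, LinearMap.mulLeft_apply, ← mul_assoc,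
    ExteriorAlgebra.ι_sq_zero, zero_mul, LinearMap.zero_apply]

lemma intMul_mul_intMul (v w : V) :
    (intMul v * intMul w : Module.End ℝ (ExteriorAlgebra ℝ V)) = -(intMul w * intMul v) := by
  refine LinearMap.ext fun x => ?_
  simpa [intMul] using CliffordAlgebra.contractLeft_comm (innerₛₗ ℝ v) (innerₛₗ ℝ w) x

lemma intMul_mul_self (v : V) :
    (intMul v * intMul v : Module.End ℝ (ExteriorAlgebra ℝ V)) = 0 := by
  refine LinearMap.ext fun x => ?_
  simpa [intMul] using CliffordAlgebra.contractLeft_contractLeft (innerₛₗ ℝ v) x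

lemma intMul_mul_extMul (v w : V) :
    (intMul v * extMul w : Module.End ℝ (ExteriorAlgebra ℝ V))
      = ⟪v, w⟫ • 1 - extMul w * intMul v := by
  refine LinearMap.ext fun x => ?_
  simpa [intMul, extMul] using CliffordAlgebra.contractLeft_ι_mul (innerₛₗ ℝ v) w x

lemma intMul_mul_extMul_of_ortho {v w : V} (h : ⟪v, w⟫ = 0) :
    (intMul v * extMul w : Module.End ℝ (ExteriorAlgebra ℝ V)) = -(extMul w * intMul v) := by
  rw [intMul_mul_extMul, h, zero_smul, zero_sub]

lemma extMul_mul_intMul_of_ortho {v w : V} (h : ⟪w, v⟫ = 0) :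
    (extMul v * intMul w : Module.End ℝ (ExteriorAlgebra ℝ V)) = -(intMul w * extMul v) := by
  have := intMul_mul_extMul_of_ortho (V := V) h
  rw [this]
  abel

/-- The core noncommutative-ring computation. -/
lemma quad_expand {R : Type*} [Ring R] (A B Xa Ya Xb Yb : R)
    (hAA : A * A = 0) (hBB : B * B = 0)
    (hXaA : Xa * A = -(A * Xa)) (hYaA : Ya * A = -(A * Ya))
    (hXaB : Xa * B = -(B * Xa)) (hYaB : Ya * B = -(B * Ya)) :
    (A - B) * ((Xa - Ya) * (A * Yb + B * Xb)) =
      -(A * (B * (Xa * Xb))) + A * (B * (Ya * Xb))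
        + B * (A * (Xa * Yb)) - B * (A * (Ya * Yb)) := by
  have sAA : ∀ w : R, A * (A * w) = 0 := fun w => by rw [← mul_assoc, hAA, zero_mul]
  have sBB : ∀ w : R, B * (B * w) = 0 := fun w => by rw [← mul_assoc, hBB, zero_mul]
  have sXaA : ∀ w : R, Xa * (A * w) = -(A * (Xa * w)) := fun w => by
    rw [← mul_assoc, hXaA, neg_mul, mul_assoc]
  have sYaA : ∀ w : R, Ya * (A * w) = -(A * (Ya * w)) := fun w => by
    rw [← mul_assoc, hYaA, neg_mul, mul_assoc]
  have sXaB : ∀ w : R, Xa * (B * w) = -(B * (Xa * w)) := fun w => by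
    rw [← mul_assoc, hXaB, neg_mul, mul_assoc]
  have sYaB : ∀ w : R, Ya * (B * w) = -(B * (Ya * w)) := fun w => by
    rw [← mul_assoc, hYaB, neg_mul, mul_assoc]
  simp only [sub_mul, add_mul, mul_add, mul_sub, mul_assoc, sXaA, sYaA, sXaB, sYaB,
    mul_neg, neg_neg, sAA, sBB, neg_zero, zero_add, add_zero, zero_sub, sub_zero]
  abel

end Aux

/-- Lemma 6.1(4). -/
theorem deRham_transmittal_endomorphism {V : Type*} [NormedAddCommGroup V]
    [InnerProductSpace ℝ V] {n : ℕ} (hn : 1 ≤ n) (e : OrthonormalBasis (Fin (n + 1)) ℝ V)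
    (L : Fin n → Fin n → ℝ) (hL : ∀ a b, L a b = L b a)
    (ω : Fin n → (ExteriorAlgebra ℝ V →ₗ[ℝ] ExteriorAlgebra ℝ V))
    (hω : ∀ a, ω a = ∑ b : Fin n, L a b •
        (extMul (e (Fin.last n)) ∘ₗ intMul (e b.castSucc)
          + intMul (e (Fin.last n)) ∘ₗ extMul (e b.castSucc))) :
    ∑ a : Fin n, clMul (e (Fin.last n)) ∘ₗ clMul (e a.castSucc) ∘ₗ ω a
      = ∑ a : Fin n, ∑ b : Fin n, L a b •
          (extMul (e (Fin.last n)) ∘ₗ intMul (e (Fin.last n)) ∘ₗ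
              intMul (e a.castSucc) ∘ₗ extMul (e b.castSucc)
            + intMul (e (Fin.last n)) ∘ₗ extMul (e (Fin.last n)) ∘ₗ
              extMul (e a.castSucc) ∘ₗ intMul (e b.castSucc)) := by
  classical
  set A : Module.End ℝ (ExteriorAlgebra ℝ V) := extMul (e (Fin.last n)) with hA
  set B : Module.End ℝ (ExteriorAlgebra ℝ V) := intMul (e (Fin.last n)) with hB
  set X : Fin n → Module.End ℝ (ExteriorAlgebra ℝ V) := fun a => extMul (e a.castSucc) with hX
  set Y : Fin n → Module.End ℝ (ExteriorAlgebra ℝ V) := fun a => intMul (e a.castSucc) with hY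
  have hne : ∀ a : Fin n, (e a.castSucc, e (Fin.last n)).1 ≠ (e a.castSucc, e (Fin.last n)).2 :=
    fun a => by
      intro h
      exact (Fin.castSucc_lt_last a).ne (e.toBasis.injective (by simpa using h))
  have horth : ∀ a : Fin n, ⟪e a.castSucc, e (Fin.last n)⟫ = 0 := fun a =>
    e.orthonormal.2 (Fin.castSucc_lt_last a).ne
  have horth' : ∀ a : Fin n, ⟪e (Fin.last n), e a.castSucc⟫ = 0 := fun a =>
    e.orthonormal.2 (Fin.castSucc_lt_last a).ne'
  -- rewrite everything in terms of ring operations in Module.End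
  simp only [hω, ← Module.End.mul_eq_comp]
  have key : ∀ a : Fin n,
      (A - B) * ((X a - Y a) * (∑ b : Fin n, L a b • (A * Y b + B * X b)))
        = ∑ b : Fin n, L a b •
            (-(A * (B * (X a * X b))) + A * (B * (Y a * X b))
              + B * (A * (X a * Y b)) - B * (A * (Y a * Y b))) := by
    intro a
    rw [Finset.mul_sum, Finset.mul_sum]
    refine Finset.sum_congr rfl fun b _ => ?_
    rw [mul_smul_comm, mul_smul_comm]
    congr 1
    exact quad_expand A B (X a) (Y a) (X b) (Y b)
      (extMul_mul_self _) (intMul_mul_self _)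
      (extMul_mul_extMul _ _) (intMul_mul_extMul_of_ortho (horth a))
      (extMul_mul_intMul_of_ortho (horth' a)) (intMul_mul_intMul _ _)
  calc ∑ a : Fin n, clMul (e (Fin.last n)) *
        (clMul (e a.castSucc) * ∑ b : Fin n, L a b • (A * Y b + B * X b))
      = ∑ a : Fin n, ∑ b : Fin n, L a b •
          (-(A * (B * (X a * X b))) + A * (B * (Y a * X b))
            + B * (A * (X a * Y b)) - B * (A * (Y a * Y b))) := by
        refine Finset.sum_congr rfl fun a _ => ?_
        rw [show clMul (e (Fin.last n)) = A - B from rfl,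
          show clMul (e a.castSucc) = X a - Y a from rfl, ← mul_assoc, mul_assoc]
        exact key a
    _ = (∑ a : Fin n, ∑ b : Fin n, L a b • (A * (B * (Y a * X b)) + B * (A * (X a * Y b))))
          + ∑ a : Fin n, ∑ b : Fin n, L a b •
            (-(A * (B * (X a * X b))) + -(B * (A * (Y a * Y b)))) := by
        rw [← Finset.sum_add_distrib]
        refine Finset.sum_congr rfl fun a _ => ?_
        rw [← Finset.sum_add_distrib]
        refine Finset.sum_congr rfl fun b _ => ?_
        rw [← smul_add]
        congr 1
        abel
    _ = ∑ a : Fin n, ∑ b : Fin n, L a b • (A * (B * (Y a * X b)) + B * (A * (X a * Y b))) := by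
        have hanti : ∀ a b : Fin n,
            L a b • (-(A * (B * (X a * X b))) + -(B * (A * (Y a * Y b))))
              = -(L b a • (-(A * (B * (X b * X a))) + -(B * (A * (Y b * Y a))))) := by
          intro a b
          rw [hL a b, show ∀ x : Module.End ℝ (ExteriorAlgebra ℝ V), -(L b a • x) = L b a • -x from
            fun x => (smul_neg _ _).symm]
          congr 1
          rw [show X a * X b = -(X b * X a) from extMul_mul_extMul _ _,
            show Y a * Y b = -(Y b * Y a) from intMul_mul_intMul _ _]
          simp only [mul_neg, neg_neg, neg_add_rev,
            show ∀ x y : Module.End ℝ (ExteriorAlgebra ℝ V), x * -y = -(x * y) from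
              fun x y => mul_neg x y,
            show ∀ x : Module.End ℝ (ExteriorAlgebra ℝ V), -(-x) = x from fun x => neg_neg x]
          abel
        have hS : (∑ a : Fin n, ∑ b : Fin n, L a b •
            (-(A * (B * (X a * X b))) + -(B * (A * (Y a * Y b))))) = 0 := by
          set S := ∑ a : Fin n, ∑ b : Fin n, L a b •
            (-(A * (B * (X a * X b))) + -(B * (A * (Y a * Y b)))) with hSdef
          have : S = -S := by
            conv_lhs => rw [hSdef, Finset.sum_comm]
            rw [hSdef, ← Finset.sum_neg_distrib]
            refine Finset.sum_congr rfl fun b _ => ?_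
            rw [← Finset.sum_neg_distrib]
            exact Finset.sum_congr rfl fun a _ => hanti a b
          have h2 : S + S = 0 := by nth_rewrite 1 [this]; abel
          have h2' : (2 : ℝ) • S = 0 := by rw [two_smul]; exact h2
          have := congrArg (fun T => (2 : ℝ)⁻¹ • T) h2'
          simpa [smul_smul] using this
        rw [hS, add_zero]
    _ = ∑ a : Fin n, ∑ b : Fin n, L a b •
          (A * (B * (Y a * X b)) + B * (A * (X a * Y b))) := rfl
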